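/- A complex matrix A ∈ M_n(ℂ) ⊆ M_n(ℍ) is diagonalizable over the quaternions ℍ (i.e., there exists an invertible S ∈ M_n(ℍ) with S⁻¹AS diagonal) if and only if A is diagonalizable over ℂ (i.e., there exists an invertible X ∈ M_n(ℂ) with X⁻¹AX diagonal). -/

import Mathlib

open scoped Quaternion

noncomputable section

/-- The canonical embedding of the complex numbers into the real quaternions. -/
def Complex.toQuat (z : ℂ) : ℍ[ℝ] := ⟨z.re, z.im, 0, 0⟩

open Polynomial


/-- squared norm of the imaginary part -/
def imNormSq (q : ℍ[ℝ]) : ℝ := q.imI^2 + q.imJ^2 + q.imK^2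

lemma imNormSq_nonneg (q : ℍ[ℝ]) : 0 ≤ imNormSq q := by unfold imNormSq; positivity

lemma normSq_eq (q : ℍ[ℝ]) : Quaternion.normSq q = q.re^2 + imNormSq q := by
  rw [Quaternion.normSq_def']; unfold imNormSq; ring

/-- the annihilating polynomial of a quaternion -/
def quatPoly (q : ℍ[ℝ]) : ℝ[X] :=
  if imNormSq q = 0 then X - C q.re else X^2 - C (2*q.re) * X + C (q.re^2 + imNormSq q)

lemma quat_quadratic (q : ℍ[ℝ]) :
    q^2 - ((2*q.re : ℝ) : ℍ[ℝ]) * q + ((q.re^2 + imNormSq q : ℝ) : ℍ[ℝ]) = 0 := by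
  have h1 : ((2*q.re : ℝ) : ℍ[ℝ]) = q + star q := (Quaternion.self_add_star' q).symm
  have h2 : ((q.re^2 + imNormSq q : ℝ) : ℍ[ℝ]) = star q * q := by
    rw [Quaternion.star_mul_self, ← normSq_eq]
  rw [h1, h2, sq, add_mul]
  abel

lemma aeval_quatPoly (q : ℍ[ℝ]) : aeval q (quatPoly q) = 0 := by
  unfold quatPoly
  split_ifs with h
  · have hI : q.imI = 0 ∧ q.imJ = 0 ∧ q.imK = 0 := by
      unfold imNormSq at h
      refine ⟨?_, ?_, ?_⟩ <;> nlinarith [sq_nonneg q.imI, sq_nonneg q.imJ, sq_nonneg q.imK]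
    simp only [map_sub, aeval_X, aeval_C]
    ext <;> simp [hI.1, hI.2.1, hI.2.2, Quaternion.re_coe, Quaternion.imI_coe,
      Quaternion.imJ_coe, Quaternion.imK_coe]
  · simp only [map_add, map_sub, map_mul, map_pow, aeval_X, aeval_C]
    have h := quat_quadratic q
    push_cast at h
    simpa only [Quaternion.algebraMap_def, Quaternion.coe_mul, Quaternion.coe_add, Quaternion.coe_pow] using h

lemma quatPoly_def (q : ℍ[ℝ]) : quatPoly q =
    if imNormSq q = 0 then X - C q.re else X^2 - C (2*q.re) * X + C (q.re^2 + imNormSq q) :=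
  rfl

def quatRoot (q : ℍ[ℝ]) : ℂ := ⟨q.re, Real.sqrt (imNormSq q)⟩

lemma quatRoot_im_pos {q : ℍ[ℝ]} (h : imNormSq q ≠ 0) : 0 < (quatRoot q).im :=
  Real.sqrt_pos.mpr (lt_of_le_of_ne (imNormSq_nonneg q) (Ne.symm h))

lemma map_quatPoly_of_ne (q : ℍ[ℝ]) (h : imNormSq q ≠ 0) :
    (quatPoly q).map (algebraMap ℝ ℂ) =
      (X - C (quatRoot q)) * (X - C ((starRingEnd ℂ) (quatRoot q))) := by
  have hs : Real.sqrt (imNormSq q) ^ 2 = imNormSq q := Real.sq_sqrt (imNormSq_nonneg q)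
  have h1 : ((2*q.re : ℝ) : ℂ) = quatRoot q + (starRingEnd ℂ) (quatRoot q) := by
    rw [Complex.add_conj]
    push_cast
    norm_num [quatRoot]
  have h2 : ((q.re^2 + imNormSq q : ℝ) : ℂ) = quatRoot q * (starRingEnd ℂ) (quatRoot q) := by
    rw [Complex.mul_conj]
    congr 1
    simp only [Complex.normSq_mk, quatRoot]
    nlinarith [hs]
  rw [quatPoly_def, if_neg h]
  simp only [Polynomial.map_add, Polynomial.map_sub, Polynomial.map_mul, Polynomial.map_pow,
    Polynomial.map_X, Polynomial.map_C, Complex.coe_algebraMap]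
  rw [h1, h2]
  simp only [C_add, C_mul]
  ring

lemma map_quatPoly_of_eq (q : ℍ[ℝ]) (h : imNormSq q = 0) :
    (quatPoly q).map (algebraMap ℝ ℂ) = X - C (q.re : ℂ) := by
  rw [quatPoly_def, if_pos h]
  simp only [Polynomial.map_sub, Polynomial.map_X, Polynomial.map_C, Complex.coe_algebraMap]

lemma isCoprime_X_sub_C {K : Type*} [Field K] {a b : K} (h : a ≠ b) :
    IsCoprime (X - C a) (X - C b) :=
  pairwise_coprime_X_sub_C Function.injective_id h

lemma separable_map_quatPoly (q : ℍ[ℝ]) : ((quatPoly q).map (algebraMap ℝ ℂ)).Separable := by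
  by_cases h : imNormSq q = 0
  · rw [map_quatPoly_of_eq q h]; exact separable_X_sub_C
  · rw [map_quatPoly_of_ne q h]
    refine separable_X_sub_C.mul separable_X_sub_C (isCoprime_X_sub_C ?_)
    intro hc
    have := congrArg Complex.im hc
    simp only [Complex.conj_im] at this
    have hpos := quatRoot_im_pos h
    linarith

lemma coprime_map_quatPoly {q q' : ℍ[ℝ]} (hne : quatPoly q ≠ quatPoly q') :
    IsCoprime ((quatPoly q).map (algebraMap ℝ ℂ)) ((quatPoly q').map (algebraMap ℝ ℂ)) := by
  by_cases h : imNormSq q = 0 <;> by_cases h' : imNormSq q' = 0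
  · rw [map_quatPoly_of_eq q h, map_quatPoly_of_eq q' h']
    refine isCoprime_X_sub_C ?_
    intro hc
    exact hne (by rw [quatPoly_def, quatPoly_def, if_pos h, if_pos h',
      (Complex.ofReal_inj.mp hc : q.re = q'.re)])
  · rw [map_quatPoly_of_eq q h, map_quatPoly_of_ne q' h']
    have hp := quatRoot_im_pos h'
    refine (isCoprime_X_sub_C ?_).mul_right (isCoprime_X_sub_C ?_) <;> intro hc
    · rw [← hc] at hp; simp at hp
    · have := congrArg Complex.im hc; simp only [Complex.conj_im, Complex.ofReal_im] at this
      linarith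
  · rw [map_quatPoly_of_ne q h, map_quatPoly_of_eq q' h']
    have hp := quatRoot_im_pos h
    refine (isCoprime_X_sub_C ?_).mul_left (isCoprime_X_sub_C ?_) <;> intro hc
    · rw [hc] at hp; simp at hp
    · have := congrArg Complex.im hc; simp only [Complex.conj_im, Complex.ofReal_im] at this
      linarith
  · have hp := quatRoot_im_pos h
    have hp' := quatRoot_im_pos h'
    have key : quatRoot q ≠ quatRoot q' := by
      intro hzz
      apply hne
      have hre : q.re = q'.re := congrArg Complex.re hzz
      have him := congrArg Complex.im hzz
      simp only [quatRoot] at him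
      have hs : imNormSq q = imNormSq q' := by
        rw [← Real.sq_sqrt (imNormSq_nonneg q), him, Real.sq_sqrt (imNormSq_nonneg q')]
      rw [quatPoly_def, quatPoly_def, if_neg h, if_neg h', hre, hs]
    rw [map_quatPoly_of_ne q h, map_quatPoly_of_ne q' h']
    have c1 : IsCoprime (X - C (quatRoot q)) (X - C (quatRoot q')) := isCoprime_X_sub_C key
    have c2 : IsCoprime (X - C (quatRoot q)) (X - C ((starRingEnd ℂ) (quatRoot q'))) := by
      refine isCoprime_X_sub_C fun hc => ?_
      have := congrArg Complex.im hc
      simp only [Complex.conj_im] at this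
      linarith
    have c3 : IsCoprime (X - C ((starRingEnd ℂ) (quatRoot q))) (X - C (quatRoot q')) := by
      refine isCoprime_X_sub_C fun hc => ?_
      have := congrArg Complex.im hc
      simp only [Complex.conj_im] at this
      linarith
    have c4 : IsCoprime (X - C ((starRingEnd ℂ) (quatRoot q)))
        (X - C ((starRingEnd ℂ) (quatRoot q'))) :=
      isCoprime_X_sub_C fun hc => key ((starRingEnd ℂ).injective hc)
    exact (c1.mul_right c2).mul_left (c3.mul_right c4)

lemma toQuat_eq : Complex.toQuat = ⇑Quaternion.ofComplex := rfl

/-- Conjugation by a unit, as an algebra homomorphism. -/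
def conjAlgHom {R A : Type*} [CommSemiring R] [Semiring A] [Algebra R A]
    (S T : A) (hST : S * T = 1) (hTS : T * S = 1) : A →ₐ[R] A where
  toFun x := S * x * T
  map_one' := by show S * 1 * T = 1; rw [mul_one, hST]
  map_mul' x y := by
    simp only [mul_assoc]
    rw [← mul_assoc T S, hTS, one_mul]
  map_zero' := by simp
  map_add' x y := by show S * (x + y) * T = S * x * T + S * y * T; rw [mul_add, add_mul]
  commutes' r := by
    show S * algebraMap R A r * T = algebraMap R A r
    rw [← Algebra.commutes r S, mul_assoc, hST, mul_one]

/-- A complex matrix, viewed as a quaternion matrix, is diagonalizable over the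
quaternions (there is an invertible quaternion matrix `S` with `S⁻¹ * A * S` diagonal)
if and only if it is diagonalizable over the complex numbers (there is an invertible
complex matrix `V` with `V⁻¹ * A * V` diagonal). -/
theorem diagonalizable_quaternion_iff_complex {n : ℕ} (A : Matrix (Fin n) (Fin n) ℂ) :
    (∃ S T : Matrix (Fin n) (Fin n) ℍ[ℝ], S * T = 1 ∧ T * S = 1 ∧
      (T * A.map Complex.toQuat * S).IsDiag) ↔
    (∃ V W : Matrix (Fin n) (Fin n) ℂ, V * W = 1 ∧ W * V = 1 ∧
      (W * A * V).IsDiag) := by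
  constructor
  · rintro ⟨S, T, hST, hTS, hdiag⟩
    classical
    set A' : Matrix (Fin n) (Fin n) ℍ[ℝ] := A.map Complex.toQuat with hA'def
    set D := T * A' * S with hDdef
    set d : Fin n → ℍ[ℝ] := fun i => D i i with hddef
    have hD : Matrix.diagonal d = D := hdiag.diagonal_diag
    set F : Finset ℝ[X] := Finset.image (fun i => quatPoly (d i)) Finset.univ with hF
    set P : ℝ[X] := F.prod id with hP
    have hdP : ∀ i, aeval (d i) P = 0 := by
      intro i
      obtain ⟨c, hc⟩ := Finset.dvd_prod_of_mem id
        (Finset.mem_image_of_mem (fun i => quatPoly (d i)) (Finset.mem_univ i))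
      rw [hP, hc, id_eq, map_mul, aeval_quatPoly, zero_mul]
    have hdPfun : (aeval d P : Fin n → ℍ[ℝ]) = 0 := by
      funext i
      rw [Pi.zero_apply, ← hdP i]
      exact (Polynomial.aeval_algHom_apply (Pi.evalAlgHom ℝ (fun _ => ℍ[ℝ]) i) d P).symm
    have hDP : aeval D P = 0 := by
      rw [← hD]
      have h1 := Polynomial.aeval_algHom_apply
        (Matrix.diagonalAlgHom (n := Fin n) (α := ℍ[ℝ]) ℝ) d P
      simp only [Matrix.diagonalAlgHom_apply] at h1
      rw [h1, hdPfun]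
      exact Matrix.diagonal_zero
    have hconj : conjAlgHom (R := ℝ) S T hST hTS D = A' := by
      show S * (T * A' * S) * T = A'
      have : S * (T * A' * S) * T = (S * T) * A' * (S * T) := by simp only [mul_assoc]
      rw [this, hST, one_mul, mul_one]
    have hA'P : aeval A' P = 0 := by
      rw [← hconj, Polynomial.aeval_algHom_apply, hDP, map_zero]
    have hAP : aeval A P = (0 : Matrix (Fin n) (Fin n) ℂ) := by
      have hinj0 : Function.Injective (Quaternion.ofComplex : ℂ →ₐ[ℝ] ℍ[ℝ]) := by
        intro z w h
        have h1 := congrArg QuaternionAlgebra.re h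
        have h2 := congrArg QuaternionAlgebra.imI h
        exact Complex.ext h1 h2
      have hmm : Quaternion.ofComplex.mapMatrix (m := Fin n) A = A' := by
        rw [AlgHom.mapMatrix_apply, hA'def, toQuat_eq]
      have h0 : Quaternion.ofComplex.mapMatrix (aeval A P) = (0 : Matrix (Fin n) (Fin n) ℍ[ℝ]) := by
        rw [← Polynomial.aeval_algHom_apply, hmm, hA'P]
      rw [AlgHom.mapMatrix_apply] at h0
      ext i j
      have h2 : Quaternion.ofComplex ((aeval A P) i j) = Quaternion.ofComplex 0 := by
        have h3 := congrFun (congrFun h0 i) j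
        simpa [Matrix.map_apply] using h3
      simpa using hinj0 h2
    set Q : ℂ[X] := P.map (algebraMap ℝ ℂ) with hQdef
    have hQprod : Q = ∏ m ∈ F, m.map (algebraMap ℝ ℂ) := by
      rw [hQdef, hP, ← Polynomial.coe_mapRingHom, map_prod]
      rfl
    have hQsep : Q.Separable := by
      rw [hQprod]
      refine Polynomial.separable_prod' ?_ ?_
      · intro x hx y hy hxy
        obtain ⟨i, -, rfl⟩ := Finset.mem_image.mp hx
        obtain ⟨j, -, rfl⟩ := Finset.mem_image.mp hy
        exact coprime_map_quatPoly hxy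
      · intro x hx
        obtain ⟨i, -, rfl⟩ := Finset.mem_image.mp hx
        exact separable_map_quatPoly _
    have hQsf : Squarefree Q := hQsep.squarefree
    have hQA : aeval A Q = 0 := by rw [hQdef, Polynomial.aeval_map_algebraMap, hAP]
    set f : Module.End ℂ (Fin n → ℂ) := Matrix.toLinAlgEquiv' A with hfdef
    have hfQ : aeval f Q = 0 := by
      rw [hfdef, Polynomial.aeval_algHom_apply Matrix.toLinAlgEquiv' A Q, hQA, map_zero]
    have hss := Module.End.isSemisimple_of_squarefree_aeval_eq_zero hQsf hfQ
    have heig : ⨆ μ : ℂ, Module.End.eigenspace f μ = ⊤ := by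
      have h1 := Module.End.iSup_maxGenEigenspace_eq_top f
      simp_rw [← hss.isFinitelySemisimple.maxGenEigenspace_eq_eigenspace]
      exact h1
    set E : Set (Fin n → ℂ) := {v | ∃ μ : ℂ, f v = μ • v} with hEdef
    have hspan : Submodule.span ℂ E = ⊤ := by
      rw [eq_top_iff, ← heig]
      refine iSup_le fun μ => fun v hv => Submodule.subset_span ⟨μ, ?_⟩
      exact Module.End.mem_eigenspace_iff.mp hv
    obtain ⟨b, hbE, hbspan, hbli⟩ := exists_linearIndependent ℂ E
    have hspanb : Submodule.span ℂ (Set.range ((↑) : b → (Fin n → ℂ))) = ⊤ := by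
      rw [Subtype.range_coe, hbspan, hspan]
    let B : Module.Basis b ℂ (Fin n → ℂ) := Module.Basis.mk hbli (le_of_eq hspanb.symm)
    haveI : Fintype b := FiniteDimensional.fintypeBasisIndex B
    have hcard : Fintype.card b = n := by
      rw [← Module.finrank_eq_card_basis B, Module.finrank_fin_fun]
    let e : b ≃ Fin n := Fintype.equivFinOfCardEq hcard
    let b' := B.reindex e
    have hb'E : ∀ j, (b' j : Fin n → ℂ) ∈ E := fun j => by
      rw [Module.Basis.reindex_apply, Module.Basis.mk_apply]
      exact hbE (e.symm j).2
    let μ : Fin n → ℂ := fun j => (hb'E j).choose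
    have hμ : ∀ j, f (b' j) = μ j • b' j := fun j => (hb'E j).choose_spec
    let Vm : Matrix (Fin n) (Fin n) ℂ := Matrix.of fun i j => b' j i
    have hVm : Vm = (Pi.basisFun ℂ (Fin n)).toMatrix ⇑b' := by
      ext i j
      rw [Module.Basis.toMatrix_apply, Pi.basisFun_repr]
      rfl
    haveI : Invertible Vm := hVm ▸ ((Pi.basisFun ℂ (Fin n)).invertibleToMatrix b')
    have hAV : A * Vm = Vm * Matrix.diagonal μ := by
      ext i j
      have h1 : (A * Vm) i j = (A.mulVec (b' j)) i := by
        simp [Matrix.mul_apply, Matrix.mulVec, dotProduct, Vm]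
      have h2 : A.mulVec (b' j) = μ j • b' j := by
        rw [← Matrix.toLinAlgEquiv'_apply, ← hfdef, hμ j]
      rw [h1, h2, Matrix.mul_diagonal]
      simp [Vm, mul_comm]
    refine ⟨Vm, ⅟Vm, mul_invOf_self Vm, invOf_mul_self Vm, ?_⟩
    rw [mul_assoc, hAV, ← mul_assoc, invOf_mul_self, one_mul]
    exact Matrix.isDiag_diagonal μ
  · rintro ⟨V, W, hVW, hWV, hdiag⟩
    refine ⟨Quaternion.ofComplex.mapMatrix V, Quaternion.ofComplex.mapMatrix W, ?_, ?_, ?_⟩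
    · rw [← map_mul, hVW, map_one]
    · rw [← map_mul, hWV, map_one]
    · have hmid : A.map Complex.toQuat = Quaternion.ofComplex.mapMatrix A := by
        rw [AlgHom.mapMatrix_apply, toQuat_eq]
      rw [hmid, ← map_mul, ← map_mul, AlgHom.mapMatrix_apply]
      exact hdiag.map (map_zero _)
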